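/- The point (K₀₁, 0, 0, 0) is an equilibrium of the Gaussian co-evolutionary model, and the Jacobian matrix (the 4×4 matrix of partial derivatives of the right-hand side) at this point has eigenvalues −r₁, r₂ − d + e·a₀·K₀₁/(1 + a₀·h·K₀₁), −r₁·σ₁²/σ_{K₁}², and −σ₂²·e·a₀·K₀₁/(σ_a²·(1 + a₀·h·K₀₁)²). Consequently, if r₂ + e·a₀·K₀₁/(1 + a₀·h·K₀₁) < d then all four eigenvalues are negative, while if r₂ + e·a₀·K₀₁/(1 + a₀·h·K₀₁) > d the Jacobian has a positive eigenvalue. -/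

import Mathlib

open Polynomial

/-- Right-hand side of the Gaussian co-evolutionary host–parasite model in
(x₁, x₂, u₁, u₂), with trait functions K₁(v) = K₀₁ exp(−v²/(2σK₁²)),
K₂(v) = K₀₂ exp(−v²/(2σK₂²)), a(v₁,v₂) = a₀ exp(−(v₁−v₂)²/(2σa²)). -/
noncomputable def coevoRHS (r₁ r₂ K₀₁ K₀₂ a₀ h e d σ₁ σ₂ σK₁ σK₂ σa : ℝ)
    (p : ℝ × ℝ × ℝ × ℝ) : ℝ × ℝ × ℝ × ℝ :=
  let x₁ := p.1; let x₂ := p.2.1; let u₁ := p.2.2.1; let u₂ := p.2.2.2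
  let K₁ := K₀₁ * Real.exp (-(u₁ ^ 2) / (2 * σK₁ ^ 2))
  let K₂ := K₀₂ * Real.exp (-(u₂ ^ 2) / (2 * σK₂ ^ 2))
  let a := a₀ * Real.exp (-((u₁ - u₂) ^ 2) / (2 * σa ^ 2))
  (x₁ * (r₁ * (1 - x₁ / K₁) - a * x₂ / (1 + h * a * x₁)),
   x₂ * (e * a * x₁ / (1 + h * a * x₁) - d + r₂ * (1 - x₂ / K₂)),
   σ₁ ^ 2 * (-(r₁ * x₁ * u₁) / (σK₁ ^ 2 * K₁)
     + (u₁ - u₂) * x₂ * a / (σa ^ 2 * (1 + h * a * x₁) ^ 2)),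
   σ₂ ^ 2 * (-(r₂ * x₂ * u₂) / (σK₂ ^ 2 * K₂)
     + e * (u₁ - u₂) * x₁ * a / (σa ^ 2 * (1 + h * a * x₁) ^ 2)))

/-- The Jacobian matrix (matrix of partial derivatives) of a vector field on ℝ⁴. -/
noncomputable def coevoJac (F : ℝ × ℝ × ℝ × ℝ → ℝ × ℝ × ℝ × ℝ) (p : ℝ × ℝ × ℝ × ℝ) :
    Matrix (Fin 4) (Fin 4) ℝ :=
  let comp : Fin 4 → (ℝ × ℝ × ℝ × ℝ) → ℝ :=
    ![fun q => q.1, fun q => q.2.1, fun q => q.2.2.1, fun q => q.2.2.2]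
  let basis : Fin 4 → ℝ × ℝ × ℝ × ℝ :=
    ![(1, 0, 0, 0), (0, 1, 0, 0), (0, 0, 1, 0), (0, 0, 0, 1)]
  Matrix.of fun i j => fderiv ℝ (fun q => comp i (F q)) p (basis j)

lemma fderiv_line' {f : ℝ × ℝ × ℝ × ℝ → ℝ} {p v : ℝ × ℝ × ℝ × ℝ} {g : ℝ → ℝ} {c : ℝ}
    (hf : DifferentiableAt ℝ f p) (heq : ∀ t : ℝ, f (p + t • v) = g t)
    (hg : HasDerivAt g c 0) : fderiv ℝ f p v = c := by
  have hline : HasDerivAt (fun t : ℝ => p + t • v) v 0 := by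
    simpa using ((hasDerivAt_id (0 : ℝ)).smul_const v).const_add p
  have hfd : HasFDerivAt f (fderiv ℝ f p) (p + (0 : ℝ) • v) := by
    simpa using hf.hasFDerivAt
  have h2 : HasDerivAt (fun t : ℝ => f (p + t • v)) (fderiv ℝ f p v) 0 := by
    exact hfd.comp_hasDerivAt 0 hline
  have h3 : HasDerivAt (fun t : ℝ => f (p + t • v)) c 0 := by
    simpa only [funext heq] using hg
  exact h2.unique h3

lemma charpoly_aux4 (d0 c01 d1 d2 c32 d3 : ℝ) :
    (!![d0, c01, 0, 0; 0, d1, 0, 0; 0, 0, d2, 0; 0, 0, c32, d3] :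
      Matrix (Fin 4) (Fin 4) ℝ).charpoly
      = (X - C d0) * (X - C d1) * (X - C d2) * (X - C d3) := by
  rw [Matrix.charpoly]
  have hc : (!![d0, c01, 0, 0; 0, d1, 0, 0; 0, 0, d2, 0; 0, 0, c32, d3] :
      Matrix (Fin 4) (Fin 4) ℝ).charmatrix
      = !![X - C d0, -C c01, 0, 0; 0, X - C d1, 0, 0; 0, 0, X - C d2, 0;
           0, 0, -C c32, X - C d3] := by
    ext i j
    fin_cases i <;> fin_cases j <;>
      simp [Matrix.charmatrix_apply, Matrix.diagonal_apply, Matrix.vecHead, Matrix.vecTail]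
  rw [hc]
  simp [Matrix.det_succ_row_zero, Fin.sum_univ_succ, Fin.succAbove]
  ring


/-- (K₀₁, 0, 0, 0) is an equilibrium of the Gaussian co-evolutionary
model; the Jacobian there has eigenvalues −r₁, r₂ − d + ea₀K₀₁/(1 + a₀hK₀₁),
−r₁σ₁²/σK₁², −σ₂²ea₀K₀₁/(σa²(1 + a₀hK₀₁)²); sign consequences. -/
theorem coevo_hostOnly_equilibrium_jacobian
    (r₁ r₂ K₀₁ K₀₂ a₀ h e d σ₁ σ₂ σK₁ σK₂ σa : ℝ)
    (hr₁ : 0 < r₁) (hr₂ : 0 < r₂) (hK₀₁ : 0 < K₀₁) (hK₀₂ : 0 < K₀₂)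
    (ha₀ : 0 < a₀) (hh : 0 < h) (he : 0 < e) (hd : 0 ≤ d)
    (hσ₁ : 0 < σ₁) (hσ₂ : 0 < σ₂) (hσK₁ : 0 < σK₁) (hσK₂ : 0 < σK₂) (hσa : 0 < σa) :
    coevoRHS r₁ r₂ K₀₁ K₀₂ a₀ h e d σ₁ σ₂ σK₁ σK₂ σa (K₀₁, 0, 0, 0) = (0, 0, 0, 0) ∧
    (coevoJac (coevoRHS r₁ r₂ K₀₁ K₀₂ a₀ h e d σ₁ σ₂ σK₁ σK₂ σa)
        (K₀₁, 0, 0, 0)).charpoly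
      = (X - C (-r₁)) * (X - C (r₂ - d + e * a₀ * K₀₁ / (1 + a₀ * h * K₀₁)))
        * (X - C (-(r₁ * σ₁ ^ 2 / σK₁ ^ 2)))
        * (X - C (-(σ₂ ^ 2 * e * a₀ * K₀₁ / (σa ^ 2 * (1 + a₀ * h * K₀₁) ^ 2)))) ∧
    (r₂ + e * a₀ * K₀₁ / (1 + a₀ * h * K₀₁) < d →
      (-r₁ < 0 ∧ r₂ - d + e * a₀ * K₀₁ / (1 + a₀ * h * K₀₁) < 0 ∧
       -(r₁ * σ₁ ^ 2 / σK₁ ^ 2) < 0 ∧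
       -(σ₂ ^ 2 * e * a₀ * K₀₁ / (σa ^ 2 * (1 + a₀ * h * K₀₁) ^ 2)) < 0)) ∧
    (r₂ + e * a₀ * K₀₁ / (1 + a₀ * h * K₀₁) > d →
      0 < r₂ - d + e * a₀ * K₀₁ / (1 + a₀ * h * K₀₁)) := by

  have hK1ne : K₀₁ ≠ 0 := hK₀₁.ne'
  have hDpos : (0:ℝ) < 1 + h * a₀ * K₀₁ := by positivity
  have hDne : (1:ℝ) + h * a₀ * K₀₁ ≠ 0 := hDpos.ne'
  set F := coevoRHS r₁ r₂ K₀₁ K₀₂ a₀ h e d σ₁ σ₂ σK₁ σK₂ σa with hF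
  set p : ℝ × ℝ × ℝ × ℝ := (K₀₁, 0, 0, 0) with hp
  -- differentiability of each scalar component at p
  have hdf1 : DifferentiableAt ℝ (fun q => (F q).1) p := by
    simp only [hF, coevoRHS, div_eq_mul_inv]
    fun_prop (disch := positivity)
  have hdf2 : DifferentiableAt ℝ (fun q => (F q).2.1) p := by
    simp only [hF, coevoRHS, div_eq_mul_inv]
    fun_prop (disch := positivity)
  have hdf3 : DifferentiableAt ℝ (fun q => (F q).2.2.1) p := by
    simp only [hF, coevoRHS, div_eq_mul_inv]
    fun_prop (disch := positivity)
  have hdf4 : DifferentiableAt ℝ (fun q => (F q).2.2.2) p := by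
    simp only [hF, coevoRHS, div_eq_mul_inv]
    fun_prop (disch := positivity)
  -- some 1-d derivative building blocks
  have hiK : HasDerivAt (fun t : ℝ => -(t ^ 2) / (2 * σK₁ ^ 2)) 0 0 := by
    simpa using ((hasDerivAt_pow 2 (0:ℝ)).neg.div_const (2 * σK₁ ^ 2))
  have hia : HasDerivAt (fun t : ℝ => -(t ^ 2) / (2 * σa ^ 2)) 0 0 := by
    simpa using ((hasDerivAt_pow 2 (0:ℝ)).neg.div_const (2 * σa ^ 2))
  have hA : HasDerivAt (fun t : ℝ => a₀ * Real.exp (-(t ^ 2) / (2 * σa ^ 2)))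
      (a₀ * (Real.exp (-((0:ℝ) ^ 2) / (2 * σa ^ 2)) * 0)) 0 := hia.exp.const_mul a₀
  -- derivative for entry (3,2), reused (negated) for (3,3)
  have hg32 : HasDerivAt (fun t : ℝ => σ₂ ^ 2 *
      (e * t * K₀₁ * (a₀ * Real.exp (-(t ^ 2) / (2 * σa ^ 2))) /
        (σa ^ 2 * (1 + h * (a₀ * Real.exp (-(t ^ 2) / (2 * σa ^ 2))) * K₀₁) ^ 2)))
      (σ₂ ^ 2 * e * a₀ * K₀₁ / (σa ^ 2 * (1 + a₀ * h * K₀₁) ^ 2)) 0 := by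
    have hnum := (((hasDerivAt_id (0:ℝ)).const_mul e).mul_const K₀₁).mul hA
    have hden := ((((hA.const_mul h).mul_const K₀₁).const_add 1).pow 2).const_mul (σa ^ 2)
    have hne3 : σa ^ 2 * (1 + h * (a₀ * Real.exp (-((0:ℝ) ^ 2) / (2 * σa ^ 2))) * K₀₁) ^ 2 ≠ 0 := by
      positivity
    have := (hnum.div hden hne3).const_mul (σ₂ ^ 2)
    convert this using 1
    · rfl
    · rfl
    · rfl
    norm_num [Real.exp_zero]
    field_simp
    all_goals ring
  -- the Jacobian matrix
  have hsimp : ∀ (i : Fin 4) (jv : ℝ × ℝ × ℝ × ℝ) (c : ℝ), True := fun _ _ _ => trivial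
  have e00 : coevoJac F p 0 0 = -r₁ := by
    simp only [coevoJac, Matrix.of_apply, Matrix.cons_val_zero]
    refine fderiv_line' hdf1 (g := fun t => (K₀₁ + t) * (r₁ * (1 - (K₀₁ + t) / K₀₁)))
      (fun t => by simp [hF, coevoRHS, hp]) ?_
    have h1 : HasDerivAt (fun t : ℝ => K₀₁ + t) 1 0 := by
      simpa using (hasDerivAt_id (0:ℝ)).const_add K₀₁
    have h2 := ((h1.div_const K₀₁).const_sub 1).const_mul r₁
    have := h1.mul h2
    convert this using 1
    · rfl
    · rfl
    · rfl
    field_simp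
    all_goals ring
  have e01 : coevoJac F p 0 1 = -(K₀₁ * a₀ / (1 + h * a₀ * K₀₁)) := by
    simp only [coevoJac, Matrix.of_apply, Matrix.cons_val_zero, Matrix.cons_val_one,
      Matrix.head_cons]
    refine fderiv_line' hdf1
      (g := fun t => K₀₁ * (r₁ * (1 - K₀₁ / K₀₁) - a₀ * t / (1 + h * a₀ * K₀₁)))
      (fun t => by simp [hF, coevoRHS, hp]) ?_
    have h1 := (((hasDerivAt_id (0:ℝ)).const_mul a₀).div_const
      (1 + h * a₀ * K₀₁)).const_sub (r₁ * (1 - K₀₁ / K₀₁))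
    have := h1.const_mul K₀₁
    convert this using 1
    · rfl
    · rfl
    · rfl
    field_simp
    all_goals ring
  have e02 : coevoJac F p 0 2 = 0 := by
    simp only [coevoJac, Matrix.of_apply, Matrix.cons_val_zero, Matrix.cons_val_two,
      Matrix.tail_cons, Matrix.head_cons]
    refine fderiv_line' hdf1
      (g := fun t => K₀₁ * (r₁ * (1 - K₀₁ / (K₀₁ * Real.exp (-(t ^ 2) / (2 * σK₁ ^ 2))))))
      (fun t => by simp [hF, coevoRHS, hp]) ?_
    have hden := hiK.exp.const_mul K₀₁
    have hne : K₀₁ * Real.exp (-((0:ℝ) ^ 2) / (2 * σK₁ ^ 2)) ≠ 0 := by positivity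
    have := ((((hasDerivAt_const (0:ℝ) K₀₁).div hden hne).const_sub 1).const_mul
      r₁).const_mul K₀₁
    convert this using 1
    · rfl
    · rfl
    · rfl
    norm_num
  have e03 : coevoJac F p 0 3 = 0 := by
    simp only [coevoJac, Matrix.of_apply, Matrix.cons_val_zero, Matrix.cons_val_three,
      Matrix.tail_cons, Matrix.head_cons]
    refine fderiv_line' hdf1 (g := fun _ => K₀₁ * (r₁ * (1 - K₀₁ / K₀₁)))
      (fun t => by simp [hF, coevoRHS, hp]) (hasDerivAt_const _ _)
  have e10 : coevoJac F p 1 0 = 0 := by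
    simp only [coevoJac, Matrix.of_apply, Matrix.cons_val_zero, Matrix.cons_val_one,
      Matrix.head_cons]
    exact fderiv_line' hdf2 (g := fun _ => 0)
      (fun t => by simp [hF, coevoRHS, hp]) (hasDerivAt_const _ _)
  have e11 : coevoJac F p 1 1 = r₂ - d + e * a₀ * K₀₁ / (1 + a₀ * h * K₀₁) := by
    simp only [coevoJac, Matrix.of_apply, Matrix.cons_val_one, Matrix.head_cons]
    refine fderiv_line' hdf2
      (g := fun t => t * (e * a₀ * K₀₁ / (1 + h * a₀ * K₀₁) - d + r₂ * (1 - t / K₀₂)))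
      (fun t => by simp [hF, coevoRHS, hp]) ?_
    have h1 := ((((hasDerivAt_id (0:ℝ)).div_const K₀₂).const_sub 1).const_mul r₂).const_add
      (e * a₀ * K₀₁ / (1 + h * a₀ * K₀₁) - d)
    have := (hasDerivAt_id (0:ℝ)).mul h1
    convert this using 1
    · rfl
    · rfl
    · rfl
    simp only [id_eq]
    field_simp
    all_goals ring
  have e12 : coevoJac F p 1 2 = 0 := by
    simp only [coevoJac, Matrix.of_apply, Matrix.cons_val_one, Matrix.cons_val_two,
      Matrix.tail_cons, Matrix.head_cons]
    exact fderiv_line' hdf2 (g := fun _ => 0)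
      (fun t => by simp [hF, coevoRHS, hp]) (hasDerivAt_const _ _)
  have e13 : coevoJac F p 1 3 = 0 := by
    simp only [coevoJac, Matrix.of_apply, Matrix.cons_val_one, Matrix.cons_val_three,
      Matrix.tail_cons, Matrix.head_cons]
    exact fderiv_line' hdf2 (g := fun _ => 0)
      (fun t => by simp [hF, coevoRHS, hp]) (hasDerivAt_const _ _)
  have e20 : coevoJac F p 2 0 = 0 := by
    simp only [coevoJac, Matrix.of_apply, Matrix.cons_val_zero, Matrix.cons_val_two,
      Matrix.tail_cons, Matrix.head_cons]
    exact fderiv_line' hdf3 (g := fun _ => 0)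
      (fun t => by simp [hF, coevoRHS, hp]) (hasDerivAt_const _ _)
  have e21 : coevoJac F p 2 1 = 0 := by
    simp only [coevoJac, Matrix.of_apply, Matrix.cons_val_one, Matrix.cons_val_two,
      Matrix.tail_cons, Matrix.head_cons]
    exact fderiv_line' hdf3 (g := fun _ => 0)
      (fun t => by simp [hF, coevoRHS, hp]) (hasDerivAt_const _ _)
  have e22 : coevoJac F p 2 2 = -(r₁ * σ₁ ^ 2 / σK₁ ^ 2) := by
    simp only [coevoJac, Matrix.of_apply, Matrix.cons_val_two, Matrix.tail_cons,
      Matrix.head_cons]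
    refine fderiv_line' hdf3
      (g := fun t => σ₁ ^ 2 *
        (-(r₁ * K₀₁ * t) / (σK₁ ^ 2 * (K₀₁ * Real.exp (-(t ^ 2) / (2 * σK₁ ^ 2))))))
      (fun t => by simp [hF, coevoRHS, hp]) ?_
    have hnum' : HasDerivAt (fun t : ℝ => -(r₁ * K₀₁ * t)) (-(r₁ * K₀₁)) 0 := by
      have := ((hasDerivAt_id (0:ℝ)).const_mul (r₁ * K₀₁)).neg
      simp only [mul_one] at this
      exact this
    have hden := (hiK.exp.const_mul K₀₁).const_mul (σK₁ ^ 2)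
    have hne : σK₁ ^ 2 * (K₀₁ * Real.exp (-((0:ℝ) ^ 2) / (2 * σK₁ ^ 2))) ≠ 0 := by positivity
    have := (hnum'.div hden hne).const_mul (σ₁ ^ 2)
    convert this using 1
    · rfl
    · rfl
    · rfl
    norm_num [Real.exp_zero]
    field_simp
    all_goals ring
  have e23 : coevoJac F p 2 3 = 0 := by
    simp only [coevoJac, Matrix.of_apply, Matrix.cons_val_two, Matrix.cons_val_three,
      Matrix.tail_cons, Matrix.head_cons]
    exact fderiv_line' hdf3 (g := fun _ => 0)
      (fun t => by simp [hF, coevoRHS, hp]) (hasDerivAt_const _ _)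
  have e30 : coevoJac F p 3 0 = 0 := by
    simp only [coevoJac, Matrix.of_apply, Matrix.cons_val_zero, Matrix.cons_val_three,
      Matrix.tail_cons, Matrix.head_cons]
    exact fderiv_line' hdf4 (g := fun _ => 0)
      (fun t => by simp [hF, coevoRHS, hp]) (hasDerivAt_const _ _)
  have e31 : coevoJac F p 3 1 = 0 := by
    simp only [coevoJac, Matrix.of_apply, Matrix.cons_val_one, Matrix.cons_val_three,
      Matrix.tail_cons, Matrix.head_cons]
    exact fderiv_line' hdf4 (g := fun _ => 0)
      (fun t => by simp [hF, coevoRHS, hp]) (hasDerivAt_const _ _)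
  have e32 : coevoJac F p 3 2 = σ₂ ^ 2 * e * a₀ * K₀₁ / (σa ^ 2 * (1 + a₀ * h * K₀₁) ^ 2) := by
    simp only [coevoJac, Matrix.of_apply, Matrix.cons_val_two, Matrix.cons_val_three,
      Matrix.tail_cons, Matrix.head_cons]
    exact fderiv_line' hdf4 (fun t => by simp [hF, coevoRHS, hp]) hg32
  have e33 : coevoJac F p 3 3 = -(σ₂ ^ 2 * e * a₀ * K₀₁ / (σa ^ 2 * (1 + a₀ * h * K₀₁) ^ 2)) := by
    simp only [coevoJac, Matrix.of_apply, Matrix.cons_val_three, Matrix.tail_cons,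
      Matrix.head_cons]
    refine fderiv_line' hdf4
      (g := fun t => σ₂ ^ 2 *
        (-(e * t * K₀₁ * (a₀ * Real.exp (-(t ^ 2) / (2 * σa ^ 2)))) /
          (σa ^ 2 * (1 + h * (a₀ * Real.exp (-(t ^ 2) / (2 * σa ^ 2))) * K₀₁) ^ 2)))
      (fun t => by simp [hF, coevoRHS, hp]) ?_
    have := hg32.neg
    simp only [neg_div, mul_neg] at this ⊢
    exact this
  have hJ : coevoJac F p =
      !![-r₁, -(K₀₁ * a₀ / (1 + h * a₀ * K₀₁)), 0, 0;
         0, r₂ - d + e * a₀ * K₀₁ / (1 + a₀ * h * K₀₁), 0, 0;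
         0, 0, -(r₁ * σ₁ ^ 2 / σK₁ ^ 2), 0;
         0, 0, σ₂ ^ 2 * e * a₀ * K₀₁ / (σa ^ 2 * (1 + a₀ * h * K₀₁) ^ 2),
           -(σ₂ ^ 2 * e * a₀ * K₀₁ / (σa ^ 2 * (1 + a₀ * h * K₀₁) ^ 2))] := by
    ext i j
    fin_cases i <;> fin_cases j
    · exact e00
    · exact e01
    · exact e02
    · exact e03
    · exact e10
    · exact e11
    · exact e12
    · exact e13
    · exact e20
    · exact e21
    · exact e22
    · exact e23
    · exact e30
    · exact e31
    · exact e32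
    · exact e33
  refine ⟨?_, ?_, ?_, ?_⟩
  · norm_num [hF, hp, coevoRHS, div_self hK1ne, Prod.ext_iff]
  · rw [hJ]
    exact charpoly_aux4 _ _ _ _ _ _
  · intro hlt
    have hQ : 0 < e * a₀ * K₀₁ / (1 + a₀ * h * K₀₁) := by positivity
    refine ⟨by linarith, by linarith, ?_, ?_⟩
    · have : 0 < r₁ * σ₁ ^ 2 / σK₁ ^ 2 := by positivity
      linarith
    · have : 0 < σ₂ ^ 2 * e * a₀ * K₀₁ / (σa ^ 2 * (1 + a₀ * h * K₀₁) ^ 2) := by positivity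
      linarith
  · intro hgt
    linarith
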